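/- Let (a_w) be square-summable complex coefficients indexed by the words w in the letters 1,…,d (Σ_w |a_w|² < ∞), and let X = (X₁,…,X_d) be a d-tuple of k×k complex matrices with ‖X₁X₁* + ⋯ + X_dX_d*‖ < 1. Then the series Σ_w a_w X^w converges in M_k(ℂ) (where X^w denotes the product of the X_i along the word w). -/

import Mathlib

open scoped BigOperators Kronecker
open Matrix

noncomputable section

/-- Words in the letters `1,…,d`. -/
abbrev Word (d : ℕ) := FreeMonoid (Fin d)

/-- The free algebra `ℂ⟨x₁,…,x_d⟩`, realized as the monoid algebra of the free monoid. -/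
abbrev FreePoly (d : ℕ) := MonoidAlgebra ℂ (Word d)

/-- Squared ℓ² norm of the coefficients of a free polynomial. -/
def FreePoly.normSq {d : ℕ} (p : FreePoly d) : ℝ := p.coeff.sum fun _ c => ‖c‖ ^ 2

/-- ℓ² norm of the coefficients of a free polynomial. -/
def FreePoly.norm2 {d : ℕ} (p : FreePoly d) : ℝ := Real.sqrt p.normSq

/-- `p` has degree at most `n`. -/
def FreePoly.degLE {d : ℕ} (p : FreePoly d) (n : ℕ) : Prop :=
  ∀ w ∈ p.coeff.support, w.toList.length ≤ n

/-- Evaluation of a word at a `d`-tuple of `k × k` matrices: `X^w`. -/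
def wordEval {d k : ℕ} (X : Fin d → Matrix (Fin k) (Fin k) ℂ) (w : Word d) :
    Matrix (Fin k) (Fin k) ℂ :=
  (w.toList.map X).prod

/-- Evaluation of a free polynomial at a matrix tuple. -/
def FreePoly.eval {d k : ℕ} (p : FreePoly d) (X : Fin d → Matrix (Fin k) (Fin k) ℂ) :
    Matrix (Fin k) (Fin k) ℂ :=
  p.coeff.sum fun w c => c • wordEval X w

/-- `k×k`-matrix-valued free polynomials `M_k(ℂ⟨x⟩)`. -/
abbrev MatPoly (d k : ℕ) := Matrix (Fin k) (Fin k) (FreePoly d)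

/-- Squared ℓ² (Frobenius) norm of the coefficients of a matrix free polynomial. -/
def MatPoly.normSq {d k : ℕ} (F : MatPoly d k) : ℝ := ∑ i, ∑ j, (F i j).normSq

def MatPoly.norm2 {d k : ℕ} (F : MatPoly d k) : ℝ := Real.sqrt F.normSq

def MatPoly.degLE {d k : ℕ} (F : MatPoly d k) (n : ℕ) : Prop := ∀ i j, (F i j).degLE n

/-- Evaluation of a matrix free polynomial at an `m×m` matrix tuple,
`F(X) = Σ_w A_w ⊗ X^w ∈ M_k(ℂ) ⊗ M_m(ℂ)`. -/
def MatPoly.eval {d k m : ℕ} (F : MatPoly d k) (X : Fin d → Matrix (Fin m) (Fin m) ℂ) :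
    Matrix (Fin k × Fin m) (Fin k × Fin m) ℂ :=
  Matrix.of fun p q => ((F p.1 q.1).eval X) p.2 q.2

/-- The homogeneous linear pencil `Ax = A₁x₁ + ⋯ + A_d x_d` as a matrix free polynomial. -/
def pencil {d m : ℕ} (A : Fin d → Matrix (Fin m) (Fin m) ℂ) : MatPoly d m :=
  Matrix.of fun i j => ∑ l, MonoidAlgebra.single (FreeMonoid.of l) (A l i j)

/-- Operator norm of a matrix, acting on Euclidean space. -/
def opNorm {ι : Type} [Fintype ι] [DecidableEq ι] (M : Matrix ι ι ℂ) : ℝ :=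
  ‖Matrix.toEuclideanCLM (𝕜 := ℂ) M‖

/-- `X` is a strict row contraction: `‖X₁X₁* + ⋯ + X_dX_d*‖ < 1`. -/
def IsStrictRowContraction {d k : ℕ} (X : Fin d → Matrix (Fin k) (Fin k) ℂ) : Prop :=
  opNorm (∑ j, X j * (X j)ᴴ) < 1

/-- The column norm `‖A‖_col = ‖Σ Aⱼ*Aⱼ‖^{1/2}`. -/
def colNorm {d m : ℕ} (A : Fin d → Matrix (Fin m) (Fin m) ℂ) : ℝ :=
  Real.sqrt (opNorm (∑ j, (A j)ᴴ * A j))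

/-- The completely positive map `Ψ_X : T ↦ Σ Xⱼ T Xⱼ*`. -/
def Psi {d n : ℕ} (X : Fin d → Matrix (Fin n) (Fin n) ℂ) :
    Module.End ℂ (Matrix (Fin n) (Fin n) ℂ) where
  toFun T := ∑ j, X j * T * (X j)ᴴ
  map_add' T S := by
    simp [Matrix.mul_add, Matrix.add_mul, Finset.sum_add_distrib]
  map_smul' c T := by
    simp [Matrix.mul_smul, Matrix.smul_mul, Finset.smul_sum]

/-- The outer spectral radius `ρ(X)`: the square root of the spectral radius of `Ψ_X`. -/
def outerRadius {d n : ℕ} (X : Fin d → Matrix (Fin n) (Fin n) ℂ) : ℝ :=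
  Real.sqrt (sSup ((fun μ : ℂ => ‖μ‖) '' spectrum ℂ (Psi X)))

/-- The `N × N` dilation `diag(A, I)` of a `k × k` matrix polynomial. -/
def dilate {d k : ℕ} (A : MatPoly d k) (N : ℕ) : MatPoly d N :=
  Matrix.of fun i j =>
    if hi : (i : ℕ) < k then
      (if hj : (j : ℕ) < k then A ⟨i, hi⟩ ⟨j, hj⟩ else 0)
    else if (i : ℕ) = (j : ℕ) then 1 else 0

/-- `A` and `B` (square matrix polynomials of possibly different sizes) are stably
associated: `P · diag(A, I) · Q = diag(B, I)` for some invertible `P, Q ∈ GL_N(ℂ⟨x⟩)`. -/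
def StablyAssociated {d k l : ℕ} (A : MatPoly d k) (B : MatPoly d l) : Prop :=
  ∃ N : ℕ, k ≤ N ∧ l ≤ N ∧ ∃ P Q : MatPoly d N, IsUnit P ∧ IsUnit Q ∧
    P * dilate A N * Q = dilate B N

/-- A tuple of matrices is irreducible if it generates the full matrix algebra. -/
def IrreducibleTuple {d : ℕ} {ι : Type} [Fintype ι] [DecidableEq ι]
    (A : Fin d → Matrix ι ι ℂ) : Prop :=
  Algebra.adjoin ℂ (Set.range A) = ⊤

/-- A regular, non-invertible matrix polynomial is an atom if it is not a product of two
non-invertible matrix polynomials. -/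
def IsAtomMP {d k : ℕ} (F : MatPoly d k) : Prop :=
  IsRegular F ∧ ¬IsUnit F ∧ ∀ G H : MatPoly d k, F = G * H → IsUnit G ∨ IsUnit H

/-- `π_n(Mx) = Σ_{k=0}^n (1 − (k+1)/(n+2)) (Mx)^k`. -/
def piMx {d m : ℕ} (n : ℕ) (M : Fin d → Matrix (Fin m) (Fin m) ℂ) : MatPoly d m :=
  ∑ k ∈ Finset.range (n + 1), (1 - ((k : ℂ) + 1) / ((n : ℂ) + 2)) • pencil M ^ k


namespace FockAux

open scoped ComplexOrder

lemma psd_le_opNorm_smul_one {n : ℕ} {B : Matrix (Fin n) (Fin n) ℂ} (hB : B.PosSemidef) :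
    (((opNorm B : ℝ) : ℂ) • (1 : Matrix (Fin n) (Fin n) ℂ) - B).PosSemidef := by
  rw [Matrix.posSemidef_iff_dotProduct_mulVec]
  constructor
  · unfold Matrix.IsHermitian
    rw [conjTranspose_sub, conjTranspose_smul, conjTranspose_one, hB.isHermitian.eq]
    simp [Complex.star_def, Complex.conj_ofReal]
  · intro x
    have hz : star x ⬝ᵥ ((((opNorm B : ℝ) : ℂ) • (1 : Matrix (Fin n) (Fin n) ℂ) - B) *ᵥ x)
        = ((opNorm B : ℝ) : ℂ) * (star x ⬝ᵥ x) - star x ⬝ᵥ (B *ᵥ x) := by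
      rw [sub_mulVec, dotProduct_sub, smul_mulVec, one_mulVec, dotProduct_smul,
        smul_eq_mul]
    rw [hz]
    have hs : 0 ≤ star x ⬝ᵥ x := dotProduct_star_self_nonneg x
    have ht : 0 ≤ star x ⬝ᵥ (B *ᵥ x) := hB.dotProduct_mulVec_nonneg x
    rw [Complex.nonneg_iff] at hs ht ⊢
    set c : ℝ := opNorm B with hc
    constructor
    · simp only [Complex.sub_re, Complex.mul_re, Complex.ofReal_re, Complex.ofReal_im,
        zero_mul, sub_zero, sub_nonneg]
      set x' : EuclideanSpace ℂ (Fin n) := (WithLp.equiv 2 _).symm x with hx'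
      have h1 : star x ⬝ᵥ (B *ᵥ x) = inner ℂ x' (toEuclideanCLM (𝕜 := ℂ) B x') := by
        rw [dotProduct_comm]; rfl
      have h2 : (star x ⬝ᵥ x).re = ‖x'‖ ^ 2 := by
        rw [← inner_self_eq_norm_sq (𝕜 := ℂ) x', dotProduct_comm]
        rfl
      rw [h1, h2]
      calc (inner ℂ x' (toEuclideanCLM (𝕜 := ℂ) B x') : ℂ).re
          ≤ ‖(inner ℂ x' (toEuclideanCLM (𝕜 := ℂ) B x') : ℂ)‖ := Complex.re_le_norm _
        _ ≤ ‖x'‖ * ‖toEuclideanCLM (𝕜 := ℂ) B x'‖ := norm_inner_le_norm _ _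
        _ ≤ ‖x'‖ * (c * ‖x'‖) := by
            gcongr; exact (toEuclideanCLM (𝕜 := ℂ) B).le_opNorm x'
        _ = c * ‖x'‖ ^ 2 := by ring
    · simp only [Complex.sub_im, Complex.mul_im, Complex.ofReal_re, Complex.ofReal_im,
        zero_mul, add_zero, ← hs.2, ← ht.2, mul_zero, sub_zero]

lemma psd_smul_real {n : ℕ} {M : Matrix (Fin n) (Fin n) ℂ} (hM : M.PosSemidef)
    {c : ℝ} (hc : 0 ≤ c) : (((c : ℂ)) • M).PosSemidef := by
  rw [Matrix.posSemidef_iff_dotProduct_mulVec]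
  constructor
  · unfold Matrix.IsHermitian
    rw [conjTranspose_smul, hM.isHermitian.eq]
    simp [Complex.star_def, Complex.conj_ofReal]
  · intro x
    rw [smul_mulVec, dotProduct_smul, smul_eq_mul]
    exact mul_nonneg (by simpa [Complex.nonneg_iff] using hc) (hM.dotProduct_mulVec_nonneg x)

lemma psd_sum {n : ℕ} {ι : Type*} (s : Finset ι) (f : ι → Matrix (Fin n) (Fin n) ℂ)
    (h : ∀ i ∈ s, (f i).PosSemidef) : (∑ i ∈ s, f i).PosSemidef :=
  Finset.sum_induction f _ (fun _ _ ha hb => ha.add hb) Matrix.PosSemidef.zero h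

variable {d k : ℕ} (X : Fin d → Matrix (Fin k) (Fin k) ℂ)

def PP {n : ℕ} (t : Fin n → Fin d) : Matrix (Fin k) (Fin k) ℂ :=
  ((List.ofFn t).map X).prod

def SS (n : ℕ) : Matrix (Fin k) (Fin k) ℂ :=
  ∑ t : Fin n → Fin d, PP X t * (PP X t)ᴴ

lemma PP_cons {n : ℕ} (j : Fin d) (t : Fin n → Fin d) :
    PP X (Fin.cons j t) = X j * PP X t := by
  simp only [PP, List.ofFn_succ, Fin.cons_zero, Fin.cons_succ, List.map_cons, List.prod_cons]

lemma SS_zero : SS X 0 = 1 := by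
  simp [SS, PP]

lemma SS_succ (n : ℕ) : SS X (n + 1) = ∑ j, X j * SS X n * (X j)ᴴ := by
  have h := Fintype.sum_equiv (Fin.consEquiv (fun _ : Fin (n+1) => Fin d))
    (fun p : (fun _ : Fin (n+1) => Fin d) 0 × ((i : Fin n) → Fin d) =>
      X p.1 * (PP X p.2 * (PP X p.2)ᴴ) * (X p.1)ᴴ)
    (fun t : (i : Fin (n+1)) → Fin d => PP X t * (PP X t)ᴴ) ?_
  · rw [SS, ← h, Fintype.sum_prod_type]
    refine Finset.sum_congr rfl fun j _ => ?_
    rw [SS, Finset.mul_sum, Finset.sum_mul]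
  · intro p
    show _ = PP X (Fin.cons p.1 p.2) * (PP X (Fin.cons p.1 p.2))ᴴ
    rw [PP_cons, conjTranspose_mul]
    simp only [Matrix.mul_assoc]

lemma SS_psd (n : ℕ) :
    (SS X n).PosSemidef ∧
    ((((opNorm (∑ j, X j * (X j)ᴴ) ^ n : ℝ)) : ℂ) •
        (1 : Matrix (Fin k) (Fin k) ℂ) - SS X n).PosSemidef := by
  set B0 := ∑ j, X j * (X j)ᴴ with hB0
  set r : ℝ := opNorm B0 with hr
  have hr0 : 0 ≤ r := norm_nonneg _
  have hB0psd : B0.PosSemidef :=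
    psd_sum _ _ fun j _ => Matrix.posSemidef_self_mul_conjTranspose (X j)
  induction n with
  | zero =>
    rw [SS_zero]
    constructor
    · exact Matrix.PosSemidef.one
    · simp only [pow_zero, Complex.ofReal_one, one_smul, sub_self]
      exact Matrix.PosSemidef.zero
  | succ n ih =>
    obtain ⟨h1, h2⟩ := ih
    constructor
    · rw [SS_succ]
      exact psd_sum _ _ fun j _ => h1.mul_mul_conjTranspose_same (X j)
    · have key : (((r ^ (n+1) : ℝ)) : ℂ) • (1 : Matrix (Fin k) (Fin k) ℂ) - SS X (n+1)
          = (∑ j, X j * ((((r ^ n : ℝ)) : ℂ) • 1 - SS X n) * (X j)ᴴ)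
            + (((r ^ n : ℝ)) : ℂ) • ((((r : ℝ)) : ℂ) • (1 : Matrix (Fin k) (Fin k) ℂ) - B0) := by
        simp only [Matrix.mul_sub, Matrix.sub_mul, Finset.sum_sub_distrib, mul_smul_comm,
          smul_mul_assoc, Matrix.mul_one, smul_sub, smul_smul, ← Finset.smul_sum, ← hB0,
          SS_succ]
        rw [show ((r ^ (n+1) : ℝ) : ℂ) = (((r ^ n : ℝ)) : ℂ) * (((r : ℝ)) : ℂ) by
          push_cast; ring]
        abel
      rw [key]
      refine Matrix.PosSemidef.add (psd_sum _ _ fun j _ => ?_) (psd_smul_real ?_ (by positivity))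
      · exact h2.mul_mul_conjTranspose_same (X j)
      · exact psd_le_opNorm_smul_one hB0psd

lemma psd_diag_re_nonneg {n : ℕ} {Q : Matrix (Fin n) (Fin n) ℂ} (hQ : Q.PosSemidef)
    (i : Fin n) : 0 ≤ (Q i i).re := by
  have h := hQ.dotProduct_mulVec_nonneg (Pi.single i 1)
  rw [Complex.nonneg_iff] at h
  have e : star (Pi.single i 1 : Fin n → ℂ) ⬝ᵥ (Q *ᵥ Pi.single i 1) = Q i i := by
    simp [Matrix.mulVec_single, dotProduct, Pi.single_apply, apply_ite]
  rw [e] at h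
  exact h.1

def Fr {n : ℕ} (M : Matrix (Fin n) (Fin n) ℂ) : ℝ := ∑ i, ∑ j, ‖M i j‖ ^ 2

lemma Fr_nonneg {n : ℕ} (M : Matrix (Fin n) (Fin n) ℂ) : 0 ≤ Fr M := by
  refine Finset.sum_nonneg fun i _ => Finset.sum_nonneg fun j _ => by positivity

lemma Fr_eq {n : ℕ} (M : Matrix (Fin n) (Fin n) ℂ) :
    Fr M = ∑ i, ((M * Mᴴ) i i).re := by
  unfold Fr
  refine Finset.sum_congr rfl fun i _ => ?_
  rw [Matrix.mul_apply, Complex.re_sum]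
  refine Finset.sum_congr rfl fun j _ => ?_
  rw [Matrix.conjTranspose_apply, Complex.star_def, Complex.mul_conj]
  rw [Complex.ofReal_re, ← Complex.sq_norm]

lemma sum_Fr_le (n : ℕ) :
    ∑ t : Fin n → Fin d, Fr (PP X t)
      ≤ k * (opNorm (∑ j, X j * (X j)ᴴ) : ℝ) ^ n := by
  set r : ℝ := opNorm (∑ j, X j * (X j)ᴴ) with hr
  have h1 : ∑ t : Fin n → Fin d, Fr (PP X t) = ∑ i, ((SS X n) i i).re := by
    rw [Finset.sum_congr rfl fun t _ => Fr_eq (PP X t), Finset.sum_comm]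
    refine Finset.sum_congr rfl fun i _ => ?_
    rw [SS, Matrix.sum_apply, Complex.re_sum]
  rw [h1]
  have h2 := (SS_psd X n).2
  calc ∑ i, ((SS X n) i i).re ≤ ∑ _i : Fin k, r ^ n := by
        refine Finset.sum_le_sum fun i _ => ?_
        have := psd_diag_re_nonneg h2 i
        simp only [Matrix.sub_apply, Matrix.smul_apply, Matrix.one_apply_eq, smul_eq_mul,
          mul_one, Complex.sub_re, Complex.ofReal_re] at this
        linarith
    _ = k * r ^ n := by simp [Finset.sum_const, nsmul_eq_mul]

end FockAux

/-- For square-summable coefficients `(a_w)` and a strict row contraction `X`, the series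
`Σ_w a_w X^w` converges in `M_k(ℂ)`. -/
theorem fock_series_converges {d k : ℕ} (a : Word d → ℂ)
    (ha : Summable fun w : Word d => ‖a w‖ ^ 2)
    (X : Fin d → Matrix (Fin k) (Fin k) ℂ) (hX : IsStrictRowContraction X) :
    Summable fun w : Word d => a w • wordEval X w := by
  classical
  unfold IsStrictRowContraction at hX
  set r : ℝ := opNorm (∑ j, X j * (X j)ᴴ) with hrdef
  have hr0 : 0 ≤ r := norm_nonneg _
  set A : ℝ := ∑' w : Word d, ‖a w‖ ^ 2 with hA
  set g : Word d → ℝ := fun w => ‖a w‖ * Real.sqrt (FockAux.Fr (wordEval X w)) with hgdef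
  have hgnn : ∀ w, 0 ≤ g w := fun w => mul_nonneg (norm_nonneg _) (Real.sqrt_nonneg _)
  -- the square root of r
  set s : ℝ := Real.sqrt r with hsdef
  have hs0 : 0 ≤ s := Real.sqrt_nonneg _
  have hs1 : s < 1 := by
    rw [hsdef, show (1 : ℝ) = Real.sqrt 1 by simp]
    exact Real.sqrt_lt_sqrt hr0 hX
  have hsqrtpow : ∀ n : ℕ, Real.sqrt (r ^ n) = s ^ n := by
    intro n
    induction n with
    | zero => simp
    | succ n ih => rw [pow_succ, Real.sqrt_mul (pow_nonneg hr0 n), ih, pow_succ]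
  -- the level bound
  have hlevel : ∀ n : ℕ,
      ∑ t : Fin n → Fin d, g (FreeMonoid.ofList (List.ofFn t))
        ≤ (Real.sqrt A * Real.sqrt k) * s ^ n := by
    intro n
    have hPP : ∀ t : Fin n → Fin d,
        wordEval X (FreeMonoid.ofList (List.ofFn t)) = FockAux.PP X t := fun t => rfl
    calc ∑ t : Fin n → Fin d, g (FreeMonoid.ofList (List.ofFn t))
        = ∑ t : Fin n → Fin d,
            ‖a (FreeMonoid.ofList (List.ofFn t))‖ * Real.sqrt (FockAux.Fr (FockAux.PP X t)) := by
          refine Finset.sum_congr rfl fun t _ => ?_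
          rw [hgdef]
          simp only [hPP t]
      _ ≤ Real.sqrt (∑ t : Fin n → Fin d, ‖a (FreeMonoid.ofList (List.ofFn t))‖ ^ 2) *
            Real.sqrt (∑ t : Fin n → Fin d, Real.sqrt (FockAux.Fr (FockAux.PP X t)) ^ 2) :=
          Real.sum_mul_le_sqrt_mul_sqrt _ _ _
      _ ≤ Real.sqrt A * Real.sqrt ((k : ℝ) * r ^ n) := by
          refine mul_le_mul (Real.sqrt_le_sqrt ?_) (Real.sqrt_le_sqrt ?_)
            (Real.sqrt_nonneg _) (Real.sqrt_nonneg _)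
          · -- partial sum of the square-summable coefficients
            have hemb : Function.Injective
                (fun t : Fin n → Fin d => FreeMonoid.ofList (List.ofFn t)) :=
              FreeMonoid.ofList.injective.comp List.ofFn_injective
            refine le_trans (le_of_eq ?_)
              (Summable.sum_le_tsum (Finset.univ.map
                ⟨fun t : Fin n → Fin d => FreeMonoid.ofList (List.ofFn t), hemb⟩)
                (fun w _ => by positivity) ha)
            exact (Finset.sum_map Finset.univ
              ⟨fun t : Fin n → Fin d => FreeMonoid.ofList (List.ofFn t), hemb⟩
              (fun w : Word d => ‖a w‖ ^ 2)).symm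
          · rw [Finset.sum_congr rfl fun t _ =>
              Real.sq_sqrt (FockAux.Fr_nonneg (FockAux.PP X t))]
            exact FockAux.sum_Fr_le X n
      _ = (Real.sqrt A * Real.sqrt k) * s ^ n := by
          rw [Real.sqrt_mul (Nat.cast_nonneg k), hsqrtpow n]
          ring
  -- summability of `g`
  have hsum : Summable g := by
    have he : Summable g ↔
        Summable fun p : Σ n : ℕ, Fin n → Fin d => g (FreeMonoid.ofList (List.ofFn p.2)) := by
      refine (Equiv.summable_iff
        ((List.equivSigmaTuple (α := Fin d)).symm.trans FreeMonoid.ofList)).symm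
    rw [he, summable_sigma_of_nonneg (fun p => hgnn _)]
    constructor
    · intro n
      exact ⟨_, hasSum_fintype _⟩
    · refine Summable.of_nonneg_of_le (fun n => ?_) (fun n => ?_)
        ((summable_geometric_of_lt_one hs0 hs1).mul_left (Real.sqrt A * Real.sqrt k))
      · rw [tsum_fintype]
        exact Finset.sum_nonneg fun t _ => hgnn _
      · rw [tsum_fintype]
        exact hlevel n
  -- conclude by norm comparison in the sup norm
  letI : NormedAddCommGroup (Matrix (Fin k) (Fin k) ℂ) := Matrix.normedAddCommGroup
  letI : NormedSpace ℂ (Matrix (Fin k) (Fin k) ℂ) := Matrix.normedSpace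
  haveI : CompleteSpace (Matrix (Fin k) (Fin k) ℂ) := FiniteDimensional.complete ℂ _
  refine Summable.of_norm_bounded hsum fun w => ?_
  rw [norm_smul]
  refine mul_le_mul_of_nonneg_left ?_ (norm_nonneg _)
  refine (Matrix.norm_le_iff (Real.sqrt_nonneg _)).2 fun i j => ?_
  rw [← Real.sqrt_sq (norm_nonneg (wordEval X w i j))]
  refine Real.sqrt_le_sqrt ?_
  rw [FockAux.Fr]
  calc ‖wordEval X w i j‖ ^ 2
      ≤ ∑ j', ‖wordEval X w i j'‖ ^ 2 :=
        Finset.single_le_sum (f := fun j' => ‖wordEval X w i j'‖ ^ 2)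
          (fun j' _ => by positivity) (Finset.mem_univ j)
    _ ≤ ∑ i', ∑ j', ‖wordEval X w i' j'‖ ^ 2 :=
        Finset.single_le_sum (f := fun i' => ∑ j', ‖wordEval X w i' j'‖ ^ 2)
          (fun i' _ => Finset.sum_nonneg fun j' _ => by positivity) (Finset.mem_univ i)
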